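/- Let Y be a conformal Killing-Yano tensor of order p with associated tensor h on an n-dimensional pseudo-Riemannian manifold, and set h'_{a b₂…b_p} = ∇_a h_{b₂…b_p}. Then h' is totally trace-free: g^{ab₂} h'_{a b₂ b₃…b_p} = 0. -/

import Mathlib

open Finset

/-- The sign of a permutation, as a real number. -/
noncomputable def esign {p : ℕ} (σ : Equiv.Perm (Fin p)) : ℝ :=
  ((Equiv.Perm.sign σ : ℤ) : ℝ)

/-- A rank-`p` tensor (in components) is totally antisymmetric. -/
def IsAlt {ι : Type*} {p : ℕ} (T : (Fin p → ι) → ℝ) : Prop :=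
  ∀ (σ : Equiv.Perm (Fin p)) (v : Fin p → ι), T (v ∘ σ) = esign σ * T v

/-- Antisymmetrization of a rank-`p` tensor (with the `1/p!` factor). -/
noncomputable def alt {ι : Type*} {p : ℕ} (T : (Fin p → ι) → ℝ) : (Fin p → ι) → ℝ :=
  fun v => (Nat.factorial p : ℝ)⁻¹ * ∑ σ : Equiv.Perm (Fin p), esign σ * T (v ∘ σ)

/-- The tensor `g_{a[b₁} h_{b₂…b_{q+1}]}` :
antisymmetrization over the last `q+1` indices of `g_{a b₁} h_{b₂…b_{q+1}}`. -/
noncomputable def ghAlt {ι : Type*} {q : ℕ} (g : ι → ι → ℝ) (h : (Fin q → ι) → ℝ)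
    (a : ι) : (Fin (q + 1) → ι) → ℝ :=
  alt fun v => g a (v 0) * h fun i => v i.succ

/-- View a "derivative" `D : ι → ((Fin p → ι) → ℝ)` as a rank-`(p+1)` tensor. -/
def totalD {ι : Type*} {p : ℕ} (D : ι → (Fin p → ι) → ℝ) : (Fin (p + 1) → ι) → ℝ :=
  fun w => D (w 0) fun i => w i.succ

lemma esign_mul {p : ℕ} (σ τ : Equiv.Perm (Fin p)) : esign (σ * τ) = esign σ * esign τ := by
  unfold esign; rw [map_mul]; push_cast; ring

lemma esign_inv {p : ℕ} (σ : Equiv.Perm (Fin p)) : esign σ⁻¹ = esign σ := by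
  unfold esign; rw [map_inv]
  rcases Int.units_eq_one_or (Equiv.Perm.sign σ) with h | h <;> simp [h]

lemma esign_sq {p : ℕ} (σ : Equiv.Perm (Fin p)) : esign σ * esign σ = 1 := by
  unfold esign
  rcases Int.units_eq_one_or (Equiv.Perm.sign σ) with h | h <;> simp [h]

lemma esign_swap {p : ℕ} {i j : Fin p} (hij : i ≠ j) : esign (Equiv.swap i j) = -1 := by
  unfold esign; rw [Equiv.Perm.sign_swap hij]; simp

lemma alt_isAlt {ι : Type*} {p : ℕ} (T : (Fin p → ι) → ℝ) : IsAlt (alt T) := by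
  intro σ v
  unfold alt
  rw [← Equiv.sum_comp (Equiv.mulLeft σ⁻¹) (fun τ => esign τ * T ((v ∘ ⇑σ) ∘ ⇑τ))]
  rw [Finset.mul_sum, Finset.mul_sum, Finset.mul_sum]
  apply Finset.sum_congr rfl
  intro ρ _
  have h0 : (Equiv.mulLeft σ⁻¹) ρ = σ⁻¹ * ρ := rfl
  have h1 : (v ∘ ⇑σ) ∘ ⇑(σ⁻¹ * ρ) = v ∘ ⇑ρ := by
    funext x; simp [Function.comp, Equiv.Perm.mul_apply]
  rw [h0, h1, esign_mul, esign_inv]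
  ring

lemma isAlt_cons {ι : Type*} {q : ℕ} {T : (Fin (q+1) → ι) → ℝ} (hT : IsAlt T) (b : ι) :
    IsAlt (fun v : Fin q → ι => T (Fin.cons b v)) := by
  intro σ v
  have h1 : (Fin.cons b (v ∘ ⇑σ) : Fin (q+1) → ι)
      = (Fin.cons b v : Fin (q+1) → ι) ∘ ⇑(Equiv.Perm.decomposeFin.symm (0, σ)) := by
    funext i
    induction i using Fin.cases with
    | zero => simp [Equiv.Perm.decomposeFin_symm_apply_zero]
    | succ j => simp [Equiv.Perm.decomposeFin_symm_apply_succ]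
  have h2 : esign (Equiv.Perm.decomposeFin.symm (0, σ)) = esign σ := by
    unfold esign
    rw [Equiv.Perm.decomposeFin.symm_sign]
    simp
  simp only
  rw [h1, hT, h2]

-- swap of the two first cons entries
lemma cons_cons_comp_swap {ι : Type*} {m : ℕ} (x y : ι) (w : Fin m → ι) :
    (Fin.cons y (Fin.cons x w) : Fin (m+2) → ι) ∘ ⇑(Equiv.swap (0 : Fin (m+2)) 1)
      = Fin.cons x (Fin.cons y w) := by
  funext i
  induction i using Fin.cases with
  | zero => simp [Equiv.swap_apply_left]
  | succ j =>
    induction j using Fin.cases with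
    | zero =>
      have : (Fin.succ (0 : Fin (m+1))) = (1 : Fin (m+2)) := by simp [Fin.succ_zero_eq_one]
      rw [this]
      simp [Equiv.swap_apply_right]
    | succ l =>
      have h1 : (l.succ.succ : Fin (m+2)) ≠ 0 := Fin.succ_ne_zero _
      have h2 : (l.succ.succ : Fin (m+2)) ≠ 1 := by
        rw [← Fin.succ_zero_eq_one]
        intro hc
        exact Fin.succ_ne_zero l (Fin.succ_injective _ hc)
      simp [Equiv.swap_apply_of_ne_of_ne h1 h2]

lemma IsAlt.swap01 {ι : Type*} {m : ℕ} {T : (Fin (m+2) → ι) → ℝ} (hT : IsAlt T)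
    (x y : ι) (w : Fin m → ι) :
    T (Fin.cons x (Fin.cons y w)) = - T (Fin.cons y (Fin.cons x w)) := by
  have h01 : (0 : Fin (m+2)) ≠ 1 := by
    intro hc
    have := congrArg Fin.val hc
    simp [Fin.val_one] at this
  have := hT (Equiv.swap 0 1) (Fin.cons y (Fin.cons x w))
  rw [cons_cons_comp_swap] at this
  rw [this]
  unfold esign
  rw [Equiv.Perm.sign_swap h01]
  simp

lemma sum_symm_antisymm {ι : Type*} [Fintype ι] (M F : ι → ι → ℝ)
    (hM : ∀ a b, M a b = M b a) (hF : ∀ a b, F a b = - F b a) :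
    ∑ a, ∑ b, M a b * F a b = 0 := by
  have h2 : (∑ a, ∑ b, M a b * F a b) = - ∑ a, ∑ b, M a b * F a b := by
    calc ∑ a, ∑ b, M a b * F a b = ∑ b, ∑ a, M a b * F a b := Finset.sum_comm
    _ = ∑ b, ∑ a, -(M b a * F b a) := by
        apply Finset.sum_congr rfl; intro b _
        apply Finset.sum_congr rfl; intro a _
        rw [hM b a, hF b a]; ring
    _ = - ∑ a, ∑ b, M a b * F a b := by rw [← Finset.sum_neg_distrib]; simp
  linarith

-- rotate a triple sum
lemma sum3_rot {ι : Type*} [Fintype ι] (f : ι → ι → ι → ℝ) :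
    ∑ a, ∑ b, ∑ e, f a b e = ∑ a, ∑ b, ∑ e, f b e a := by
  have h1 : ∀ (g : ι → ι → ι → ℝ), ∑ a, ∑ b, ∑ e, g a b e = ∑ b, ∑ e, ∑ a, g a b e := by
    intro g
    rw [Finset.sum_comm]
    exact Finset.sum_congr rfl fun b _ => Finset.sum_comm
  rw [h1 (fun a b e => f b e a)]

lemma sum_cyclic {ι : Type*} [Fintype ι] (R Q : ι → ι → ι → ℝ)
    (hR : ∀ a b e, R a b e + R b e a + R e a b = 0)
    (hQ : ∀ a b e, Q a b e = Q b e a) :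
    ∑ a, ∑ b, ∑ e, R a b e * Q a b e = 0 := by
  have e1 : ∑ a, ∑ b, ∑ e, R a b e * Q a b e = ∑ a, ∑ b, ∑ e, R b e a * Q a b e := by
    rw [sum3_rot]
    exact Finset.sum_congr rfl fun a _ => Finset.sum_congr rfl fun b _ =>
      Finset.sum_congr rfl fun e _ => by rw [← hQ]
  have e2 : ∑ a, ∑ b, ∑ e, R a b e * Q a b e = ∑ a, ∑ b, ∑ e, R e a b * Q a b e := by
    rw [sum3_rot, sum3_rot]
    exact Finset.sum_congr rfl fun a _ => Finset.sum_congr rfl fun b _ =>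
      Finset.sum_congr rfl fun e _ => by rw [hQ]
  have e3 : (∑ a, ∑ b, ∑ e, R a b e * Q a b e) + (∑ a, ∑ b, ∑ e, R a b e * Q a b e)
      + (∑ a, ∑ b, ∑ e, R a b e * Q a b e) = 0 := by
    nth_rewrite 3 [e2]
    nth_rewrite 2 [e1]
    simp only [← Finset.sum_add_distrib]
    apply Finset.sum_eq_zero; intro a _
    apply Finset.sum_eq_zero; intro b _
    apply Finset.sum_eq_zero; intro e _
    linear_combination (Q a b e) * (hR a b e)
  linarith


lemma sum4_swap {α β γ δ : Type*} [Fintype α] [Fintype β] [Fintype γ] [Fintype δ]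
    (f : α → β → γ → δ → ℝ) :
    ∑ b, ∑ x, ∑ k, ∑ e, f b x k e = ∑ k, ∑ e, ∑ b, ∑ x, f b x k e := by
  have h1 : ∀ (h : β → γ → δ → ℝ), ∑ x, ∑ k, ∑ e', h x k e' = ∑ k, ∑ e', ∑ x, h x k e' := by
    intro h
    rw [Finset.sum_comm]
    exact Finset.sum_congr rfl fun _ _ => Finset.sum_comm
  calc ∑ b, ∑ x, ∑ k, ∑ e', f b x k e' = ∑ b, ∑ k, ∑ e', ∑ x, f b x k e' :=
        Finset.sum_congr rfl fun b _ => h1 _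
  _ = ∑ k, ∑ b, ∑ e', ∑ x, f b x k e' := Finset.sum_comm
  _ = ∑ k, ∑ e', ∑ b, ∑ x, f b x k e' := Finset.sum_congr rfl fun k _ => Finset.sum_comm

lemma trace_ghAlt {ι : Type*} [Fintype ι] [DecidableEq ι] {q : ℕ}
    (g ginv : ι → ι → ℝ) (hgsymm : ∀ a b, g a b = g b a)
    (hginvsymm : ∀ a b, ginv a b = ginv b a)
    (hinv : ∀ a b, ∑ c, ginv a c * g c b = if a = b then (1:ℝ) else 0)
    (F : (Fin q → ι) → ℝ) (hF : IsAlt F) (w : Fin q → ι) :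
    ∑ b, ∑ x, ginv b x * ghAlt g F b (Fin.cons x w)
      = ((Fintype.card ι : ℝ) - q) / (q + 1) * F w := by
  set C : ℝ := ((q+1).factorial : ℝ)⁻¹ with hC
  set t : ι → ι → Fin (q+1) → Equiv.Perm (Fin q) → ℝ := fun b x k e =>
    esign (Equiv.Perm.decomposeFin.symm (k, e)) *
      (g b ((Fin.cons x w : Fin (q+1) → ι) k) *
        F (fun i => (Fin.cons x w : Fin (q+1) → ι) ((Equiv.swap 0 k) ((e i).succ)))) with ht
  have expand : ∀ b x, ghAlt g F b (Fin.cons x w) = C * ∑ k, ∑ e, t b x k e := by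
    intro b x
    unfold ghAlt alt
    congr 1
    rw [Fintype.sum_equiv Equiv.Perm.decomposeFin
      (fun σ => esign σ * (g b (((Fin.cons x w : Fin (q+1) → ι) ∘ ⇑σ) 0) *
        F (fun i => ((Fin.cons x w : Fin (q+1) → ι) ∘ ⇑σ) i.succ)))
      (fun p => esign (Equiv.Perm.decomposeFin.symm p) *
        (g b (((Fin.cons x w : Fin (q+1) → ι) ∘ ⇑(Equiv.Perm.decomposeFin.symm p)) 0) *
          F (fun i => ((Fin.cons x w : Fin (q+1) → ι) ∘ ⇑(Equiv.Perm.decomposeFin.symm p)) i.succ)))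
      (fun σ => by simp only [Equiv.symm_apply_apply])]
    rw [Fintype.sum_prod_type]
    apply Finset.sum_congr rfl; intro k _
    apply Finset.sum_congr rfl; intro e _
    simp only [ht, Function.comp_apply, Equiv.Perm.decomposeFin_symm_apply_zero,
      Equiv.Perm.decomposeFin_symm_apply_succ]
  have step1 : ∑ b, ∑ x, ginv b x * ghAlt g F b (Fin.cons x w)
      = ∑ k, ∑ e, ∑ b, ∑ x, ginv b x * (C * t b x k e) := by
    rw [← sum4_swap]
    apply Finset.sum_congr rfl; intro b _
    apply Finset.sum_congr rfl; intro x _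
    rw [expand b x]
    simp only [Finset.mul_sum]
  have key : ∀ (k : Fin (q+1)) (e : Equiv.Perm (Fin q)),
      ∑ b, ∑ x, ginv b x * (C * t b x k e)
        = (if k = 0 then (Fintype.card ι : ℝ) else -1) * (C * F w) := by
    intro k e
    induction k using Fin.cases with
    | zero =>
      rw [if_pos rfl]
      have hsgn : esign (Equiv.Perm.decomposeFin.symm ((0 : Fin (q+1)), e)) = esign e := by
        unfold esign
        rw [Equiv.Perm.decomposeFin.symm_sign]
        simp
      have step : ∀ b x : ι, ginv b x * (C * t b x 0 e)
          = (ginv b x * g b x) * (esign e * esign e * (C * F w)) := by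
        intro b x
        have harg : (fun i => (Fin.cons x w : Fin (q+1) → ι)
            ((Equiv.swap (0 : Fin (q+1)) 0) ((e i).succ))) = w ∘ ⇑e := by
          funext i
          simp [Equiv.swap_self]
        simp only [ht]
        rw [harg, hF e w, hsgn, Fin.cons_zero]
        ring
      calc ∑ b, ∑ x, ginv b x * (C * t b x 0 e)
          = ∑ b, ∑ x, (ginv b x * g b x) * (esign e * esign e * (C * F w)) := by
            exact Finset.sum_congr rfl fun b _ => Finset.sum_congr rfl fun x _ => step b x
        _ = (∑ b, ∑ x, ginv b x * g b x) * (C * F w) := by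
            rw [esign_sq, one_mul]
            simp only [← Finset.sum_mul]
        _ = (Fintype.card ι : ℝ) * (C * F w) := by
            congr 1
            have hrow : ∀ b : ι, ∑ x, ginv b x * g b x = 1 := by
              intro b
              have h1 : ∑ x, ginv b x * g b x = ∑ x, ginv b x * g x b :=
                Finset.sum_congr rfl fun x _ => by rw [hgsymm b x]
              rw [h1, hinv b b, if_pos rfl]
            simp [hrow]
    | succ j =>
      rw [if_neg (Fin.succ_ne_zero j)]
      have hsgn : esign (Equiv.Perm.decomposeFin.symm (j.succ, e)) = -esign e := by
        unfold esign
        rw [Equiv.Perm.decomposeFin.symm_sign]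
        simp [Fin.succ_ne_zero]
      set A : ι → Fin q → ι := fun x => fun i =>
        (Fin.cons x w : Fin (q+1) → ι) ((Equiv.swap 0 j.succ) ((e i).succ)) with hA
      have harg : A (w j) = w ∘ ⇑e := by
        funext i
        simp only [hA]
        by_cases h : e i = j
        · subst h
          simp [Equiv.swap_apply_right]
        · have h1 : ((e i).succ : Fin (q+1)) ≠ 0 := Fin.succ_ne_zero _
          have h2 : ((e i).succ : Fin (q+1)) ≠ j.succ := fun hc => h (Fin.succ_injective _ hc)
          simp [Equiv.swap_apply_of_ne_of_ne h1 h2, Fin.cons_succ, Function.comp]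
      calc ∑ b, ∑ x, ginv b x * (C * t b x j.succ e)
          = ∑ x, ∑ b, (ginv x b * g b (w j)) * (-esign e * (C * F (A x))) := by
            rw [Finset.sum_comm]
            apply Finset.sum_congr rfl; intro x _
            apply Finset.sum_congr rfl; intro b _
            simp only [ht, hA]
            rw [hsgn, Fin.cons_succ, hginvsymm b x]
            ring
        _ = ∑ x, (if x = w j then (1:ℝ) else 0) * (-esign e * (C * F (A x))) := by
            apply Finset.sum_congr rfl; intro x _
            rw [← Finset.sum_mul, hinv x (w j)]
        _ = -esign e * (C * F (A (w j))) := by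
            simp only [ite_mul, one_mul, zero_mul]
            rw [Finset.sum_ite_eq' Finset.univ (w j)
              (fun x => -esign e * (C * F (A x)))]
            simp
        _ = -1 * (C * F w) := by
            rw [harg, hF e w]
            linear_combination (-(C * F w)) * esign_sq e
  rw [step1]
  have hcount : ∀ k : Fin (q+1),
      ∑ e : Equiv.Perm (Fin q), (if k = 0 then (Fintype.card ι : ℝ) else -1) * (C * F w)
        = (q.factorial : ℝ) * ((if k = 0 then (Fintype.card ι : ℝ) else -1) * (C * F w)) := by
    intro k
    rw [Finset.sum_const, Finset.card_univ, Fintype.card_perm, Fintype.card_fin, nsmul_eq_mul]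
  calc ∑ k, ∑ e, ∑ b, ∑ x, ginv b x * (C * t b x k e)
      = ∑ k : Fin (q+1), (q.factorial : ℝ) * ((if k = 0 then (Fintype.card ι : ℝ) else -1) * (C * F w)) := by
        apply Finset.sum_congr rfl; intro k _
        rw [← hcount k]
        exact Finset.sum_congr rfl fun e _ => key k e
    _ = (q.factorial : ℝ) * ((Fintype.card ι : ℝ) * (C * F w))
        + ∑ j : Fin q, (q.factorial : ℝ) * ((-1 : ℝ) * (C * F w)) := by
        rw [Fin.sum_univ_succ, if_pos rfl,
          Finset.sum_congr rfl (fun (j : Fin q) _ => by rw [if_neg (Fin.succ_ne_zero j)] :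
            ∀ j ∈ Finset.univ, (q.factorial : ℝ) *
              ((if (j.succ : Fin (q+1)) = 0 then (Fintype.card ι : ℝ) else -1) * (C * F w))
              = (q.factorial : ℝ) * ((-1 : ℝ) * (C * F w)))]
    _ = ((Fintype.card ι : ℝ) - q) / (q + 1) * F w := by
        rw [Finset.sum_const, Finset.card_univ, Fintype.card_fin, nsmul_eq_mul, hC]
        have hfac : (((q+1).factorial : ℕ) : ℝ) = ((q+1 : ℕ) : ℝ) * (q.factorial : ℝ) := by
          rw [Nat.factorial_succ]; push_cast; ring
        rw [hfac]
        have h1 : (q.factorial : ℝ) ≠ 0 := Nat.cast_ne_zero.mpr (Nat.factorial_ne_zero q)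
        have h2 : ((q+1 : ℕ) : ℝ) ≠ 0 := Nat.cast_ne_zero.mpr (Nat.succ_ne_zero q)
        field_simp
        push_cast
        ring

lemma sum_mul_sum2 {ι : Type*} [Fintype ι] (P Q : ι → ι → ℝ) :
    (∑ a, ∑ y, P a y) * (∑ x, ∑ f, Q x f) = ∑ a, ∑ y, ∑ x, ∑ f, P a y * Q x f := by
  rw [Finset.sum_mul]
  apply Finset.sum_congr rfl; intro a _
  rw [Finset.sum_mul]
  apply Finset.sum_congr rfl; intro y _
  rw [Finset.mul_sum]
  apply Finset.sum_congr rfl; intro x _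
  rw [Finset.mul_sum]
/-- Let `Y` be a conformal Killing–Yano tensor of order `p = r+2`
with associated tensor `h` on an `n`-dimensional pseudo-Riemannian manifold
(`p < n+1`), and let `h'_{a b₂…b_p} = ∇_a h_{b₂…b_p}` (denoted `Dh`).  Using the
covariant derivative `D = ∇Y`, the second derivative `DDY = ∇∇Y` subject to the
differentiated CKY equation and the Ricci identity, and the symmetries and first
Bianchi identity of the Riemann tensor, `h'` is totally trace-free:
`g^{a b₂} h'_{a b₂ b₃…b_p} = 0`. -/
theorem statement6 {ι : Type*} [Fintype ι] [DecidableEq ι] {r : ℕ}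
    (hdim : r + 2 < Fintype.card ι + 1)
    (g ginv : ι → ι → ℝ)
    (hgsymm : ∀ a b, g a b = g b a) (hginvsymm : ∀ a b, ginv a b = ginv b a)
    (hinv : ∀ a b, ∑ c, ginv a c * g c b = if a = b then (1 : ℝ) else 0)
    (Y : (Fin (r + 2) → ι) → ℝ) (hYalt : IsAlt Y)
    (h : (Fin (r + 1) → ι) → ℝ) (hhalt : IsAlt h)
    (D : ι → (Fin (r + 2) → ι) → ℝ) (hDalt : ∀ a, IsAlt (D a))
    (Dh : ι → (Fin (r + 1) → ι) → ℝ) (hDhalt : ∀ a, IsAlt (Dh a))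
    (DDY : ι → ι → (Fin (r + 2) → ι) → ℝ)
    (Riem : ι → ι → ι → ι → ℝ)
    (hCKY : ∀ (a : ι) (v : Fin (r + 2) → ι),
      D a v = alt (totalD D) (Fin.cons a v) + 2 * ghAlt g h a v)
    (hDCKY : ∀ (a b : ι) (v : Fin (r + 2) → ι),
      DDY a b v = alt (totalD (DDY a)) (Fin.cons b v) + 2 * ghAlt g (Dh a) b v)
    (hRicciId : ∀ (a b : ι) (v : Fin (r + 2) → ι),
      DDY a b v - DDY b a v
        = ∑ i : Fin (r + 2), ∑ e, ∑ f,
            Riem a b (v i) e * ginv e f * Y (Function.update v i f))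
    (hRiemAsym₁ : ∀ a b c d, Riem a b c d = -Riem b a c d)
    (hRiemAsym₂ : ∀ a b c d, Riem a b c d = -Riem a b d c)
    (hRiemPair : ∀ a b c d, Riem a b c d = Riem c d a b)
    (hBianchi : ∀ a b c d, Riem a b c d + Riem b c a d + Riem c a b d = 0) :
    ∀ v : Fin r → ι, ∑ a, ∑ b, ginv a b * Dh a (Fin.cons b v) = 0 := by
  intro v
  have hcardlt : ((r : ℝ) + 1) < (Fintype.card ι : ℝ) := by
    have : r + 1 < Fintype.card ι := by omega
    exact_mod_cast this
  -- DDY is alternating in its tensor indices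
  have hDDYalt : ∀ a b, IsAlt (DDY a b) := by
    intro a b σ V
    rw [hDCKY a b (V ∘ ⇑σ), hDCKY a b V]
    have h1 := isAlt_cons (alt_isAlt (totalD (DDY a))) b σ V
    simp only at h1
    have h2 : ghAlt g (Dh a) b (V ∘ ⇑σ) = esign σ * ghAlt g (Dh a) b V :=
      alt_isAlt (fun u : Fin (r+2) → ι => g b (u 0) * Dh a fun i => u i.succ) σ V
    rw [h1, h2]
    ring
  have hDDYswap : ∀ a b x y (w : Fin r → ι),
      DDY a b (Fin.cons x (Fin.cons y w)) = - DDY a b (Fin.cons y (Fin.cons x w)) :=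
    fun a b x y w => IsAlt.swap01 (hDDYalt a b) x y w
  have hYswap : ∀ x y (w : Fin r → ι),
      Y (Fin.cons x (Fin.cons y w)) = - Y (Fin.cons y (Fin.cons x w)) :=
    fun x y w => IsAlt.swap01 hYalt x y w
  -- trace formula from the differentiated CKY equation
  have htrace : ∀ a (w : Fin (r+1) → ι),
      ∑ b, ∑ x, ginv b x * DDY a b (Fin.cons x w)
        = 2 * ((((Fintype.card ι : ℝ) - ((r+1 : ℕ) : ℝ)) / (((r+1 : ℕ) : ℝ) + 1)) * Dh a w) := by
    intro a w
    have hzero : ∑ b, ∑ x, ginv b x * alt (totalD (DDY a)) (Fin.cons b (Fin.cons x w)) = 0 :=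
      sum_symm_antisymm ginv (fun b x => alt (totalD (DDY a)) (Fin.cons b (Fin.cons x w)))
        hginvsymm (fun b x => IsAlt.swap01 (alt_isAlt (totalD (DDY a))) b x w)
    calc ∑ b, ∑ x, ginv b x * DDY a b (Fin.cons x w)
        = ∑ b, ∑ x, (ginv b x * alt (totalD (DDY a)) (Fin.cons b (Fin.cons x w))
            + 2 * (ginv b x * ghAlt g (Dh a) b (Fin.cons x w))) := by
          apply Finset.sum_congr rfl; intro b _
          apply Finset.sum_congr rfl; intro x _
          rw [hDCKY a b (Fin.cons x w)]; ring
      _ = (∑ b, ∑ x, ginv b x * alt (totalD (DDY a)) (Fin.cons b (Fin.cons x w)))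
          + 2 * ∑ b, ∑ x, ginv b x * ghAlt g (Dh a) b (Fin.cons x w) := by
          rw [Finset.mul_sum, ← Finset.sum_add_distrib]
          apply Finset.sum_congr rfl; intro b _
          rw [Finset.mul_sum, ← Finset.sum_add_distrib]
      _ = 2 * ((((Fintype.card ι : ℝ) - ((r+1 : ℕ) : ℝ)) / (((r+1 : ℕ) : ℝ) + 1)) * Dh a w) := by
          rw [hzero, zero_add, trace_ghAlt g ginv hgsymm hginvsymm hinv (Dh a) (hDhalt a) w]
  -- the doubly contracted second derivative
  have hU1 : ∑ a, ∑ y, ∑ b, ∑ x, ginv a y * (ginv b x * DDY a b (Fin.cons x (Fin.cons y v)))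
      = 2 * ((((Fintype.card ι : ℝ) - ((r+1 : ℕ) : ℝ)) / (((r+1 : ℕ) : ℝ) + 1)) *
          ∑ a, ∑ y, ginv a y * Dh a (Fin.cons y v)) := by
    calc ∑ a, ∑ y, ∑ b, ∑ x, ginv a y * (ginv b x * DDY a b (Fin.cons x (Fin.cons y v)))
        = ∑ a, ∑ y, ginv a y * (2 * ((((Fintype.card ι : ℝ) - ((r+1 : ℕ) : ℝ)) / (((r+1 : ℕ) : ℝ) + 1)) * Dh a (Fin.cons y v))) := by
          apply Finset.sum_congr rfl; intro a _
          apply Finset.sum_congr rfl; intro y _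
          rw [← htrace a (Fin.cons y v), Finset.mul_sum]
          apply Finset.sum_congr rfl; intro b _
          rw [Finset.mul_sum]
      _ = 2 * ((((Fintype.card ι : ℝ) - ((r+1 : ℕ) : ℝ)) / (((r+1 : ℕ) : ℝ) + 1)) *
          ∑ a, ∑ y, ginv a y * Dh a (Fin.cons y v)) := by
          simp only [Finset.mul_sum]
          apply Finset.sum_congr rfl; intro a _
          apply Finset.sum_congr rfl; intro y _
          ring
  -- the Riemann contraction term
  have hWzero : ∑ a, ∑ y, ∑ b, ∑ x, ginv a y * (ginv b x *
      (∑ i : Fin (r+2), ∑ e, ∑ f,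
        Riem a b ((Fin.cons y (Fin.cons x v) : Fin (r+2) → ι) i) e * ginv e f *
          Y (Function.update (Fin.cons y (Fin.cons x v)) i f))) = 0 := by
    -- split the sum over the slot index i into i = 0, i = 1, and i = j+2
    have hRic : ∀ a b y x, (∑ i : Fin (r+2), ∑ e, ∑ f,
        Riem a b ((Fin.cons y (Fin.cons x v) : Fin (r+2) → ι) i) e * ginv e f *
          Y (Function.update (Fin.cons y (Fin.cons x v)) i f))
      = (∑ e, ∑ f, Riem a b y e * ginv e f * Y (Fin.cons f (Fin.cons x v)))
        + ((∑ e, ∑ f, Riem a b x e * ginv e f * Y (Fin.cons y (Fin.cons f v)))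
        + ∑ j : Fin r, ∑ e, ∑ f, Riem a b (v j) e * ginv e f *
            Y (Fin.cons y (Fin.cons x (Function.update v j f)))) := by
      intro a b y x
      rw [Fin.sum_univ_succ, Fin.sum_univ_succ]
      simp only [Fin.cons_zero, Fin.cons_succ, ← Fin.cons_update, Fin.update_cons_zero]
    have hsplit : ∑ a, ∑ y, ∑ b, ∑ x, ginv a y * (ginv b x *
        (∑ i : Fin (r+2), ∑ e, ∑ f,
          Riem a b ((Fin.cons y (Fin.cons x v) : Fin (r+2) → ι) i) e * ginv e f *
            Y (Function.update (Fin.cons y (Fin.cons x v)) i f)))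
      = (∑ a, ∑ y, ∑ b, ∑ x, ∑ e, ∑ f, ginv a y * (ginv b x *
          (Riem a b y e * ginv e f * Y (Fin.cons f (Fin.cons x v)))))
        + ((∑ a, ∑ y, ∑ b, ∑ x, ∑ e, ∑ f, ginv a y * (ginv b x *
          (Riem a b x e * ginv e f * Y (Fin.cons y (Fin.cons f v)))))
        + ∑ a, ∑ y, ∑ b, ∑ x, ∑ j : Fin r, ∑ e, ∑ f, ginv a y * (ginv b x *
          (Riem a b (v j) e * ginv e f * Y (Fin.cons y (Fin.cons x (Function.update v j f)))))) := by
      simp only [← Finset.sum_add_distrib]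
      apply Finset.sum_congr rfl; intro a _
      apply Finset.sum_congr rfl; intro y _
      apply Finset.sum_congr rfl; intro b _
      apply Finset.sum_congr rfl; intro x _
      rw [hRic a b y x]
      simp only [mul_add, Finset.mul_sum]
    rw [hsplit]
    have h01 : (0 : Fin (r+2)) ≠ 1 := by
      intro hc
      have := congrArg Fin.val hc
      simp [Fin.val_one] at this
    -- first piece : contraction with one Ricci-type symmetric tensor
    have hA0 : (∑ a, ∑ y, ∑ b, ∑ x, ∑ e, ∑ f, ginv a y * (ginv b x *
        (Riem a b y e * ginv e f * Y (Fin.cons f (Fin.cons x v))))) = 0 := by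
      have hfact : (∑ a, ∑ y, ∑ b, ∑ x, ∑ e, ∑ f, ginv a y * (ginv b x *
          (Riem a b y e * ginv e f * Y (Fin.cons f (Fin.cons x v)))))
        = ∑ b, ∑ e, (∑ a, ∑ y, ginv a y * Riem a b y e) *
            (∑ x, ∑ f, ginv b x * (ginv e f * Y (Fin.cons f (Fin.cons x v)))) := by
        conv_lhs => enter [2, a]; rw [Finset.sum_comm]
        conv_lhs => rw [Finset.sum_comm]
        conv_lhs => enter [2, b, 2, a, 2, y]; rw [Finset.sum_comm]
        conv_lhs => enter [2, b, 2, a]; rw [Finset.sum_comm]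
        conv_lhs => enter [2, b]; rw [Finset.sum_comm]
        apply Finset.sum_congr rfl; intro b _
        apply Finset.sum_congr rfl; intro e _
        rw [sum_mul_sum2]
        apply Finset.sum_congr rfl; intro a _
        apply Finset.sum_congr rfl; intro y _
        apply Finset.sum_congr rfl; intro x _
        apply Finset.sum_congr rfl; intro f _
        ring
      rw [hfact]
      apply sum_symm_antisymm
      · intro b e
        rw [Finset.sum_comm]
        apply Finset.sum_congr rfl; intro a _
        apply Finset.sum_congr rfl; intro y _
        rw [hginvsymm y a, hRiemPair y b a e]
      · intro b e
        have h1 : (∑ x, ∑ f, ginv e x * (ginv b f * Y (Fin.cons f (Fin.cons x v))))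
            = ∑ x, ∑ f, ginv e f * (ginv b x * Y (Fin.cons x (Fin.cons f v))) :=
          Finset.sum_comm
        rw [h1]
        simp only [← Finset.sum_neg_distrib]
        apply Finset.sum_congr rfl; intro x _
        apply Finset.sum_congr rfl; intro f _
        rw [hYswap x f v]
        ring
    -- second piece
    have hA1 : (∑ a, ∑ y, ∑ b, ∑ x, ∑ e, ∑ f, ginv a y * (ginv b x *
        (Riem a b x e * ginv e f * Y (Fin.cons y (Fin.cons f v))))) = 0 := by
      have hfact : (∑ a, ∑ y, ∑ b, ∑ x, ∑ e, ∑ f, ginv a y * (ginv b x *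
          (Riem a b x e * ginv e f * Y (Fin.cons y (Fin.cons f v)))))
        = ∑ a, ∑ e, (∑ b, ∑ x, ginv b x * Riem a b x e) *
            (∑ y, ∑ f, ginv a y * (ginv e f * Y (Fin.cons y (Fin.cons f v)))) := by
        conv_lhs => enter [2, a]; rw [Finset.sum_comm]
        conv_lhs => enter [2, a, 2, b]; rw [Finset.sum_comm]
        conv_lhs => enter [2, a, 2, b, 2, x]; rw [Finset.sum_comm]
        conv_lhs => enter [2, a, 2, b]; rw [Finset.sum_comm]
        conv_lhs => enter [2, a]; rw [Finset.sum_comm]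
        apply Finset.sum_congr rfl; intro a _
        apply Finset.sum_congr rfl; intro e _
        rw [sum_mul_sum2]
        apply Finset.sum_congr rfl; intro b _
        apply Finset.sum_congr rfl; intro x _
        apply Finset.sum_congr rfl; intro y _
        apply Finset.sum_congr rfl; intro f _
        ring
      rw [hfact]
      apply sum_symm_antisymm
      · intro a e
        rw [Finset.sum_comm]
        apply Finset.sum_congr rfl; intro b _
        apply Finset.sum_congr rfl; intro x _
        rw [hginvsymm x b]
        have : Riem a x b e = Riem e b x a := by
          linarith [hRiemPair e b x a, hRiemAsym₁ x a e b, hRiemAsym₂ a x e b,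
            hRiemAsym₁ a x b e, hRiemAsym₂ x a e b]
        rw [this]
      · intro a e
        have h1 : (∑ y, ∑ f, ginv e y * (ginv a f * Y (Fin.cons y (Fin.cons f v))))
            = ∑ y, ∑ f, ginv e f * (ginv a y * Y (Fin.cons f (Fin.cons y v))) :=
          Finset.sum_comm
        rw [h1]
        simp only [← Finset.sum_neg_distrib]
        apply Finset.sum_congr rfl; intro y _
        apply Finset.sum_congr rfl; intro f _
        rw [hYswap f y v]
        ring
    -- cyclic invariance of Y in slots 0, 1, j+2
    have hYcyc : ∀ (j : Fin r) (x y f' : ι),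
        Y (Fin.cons x (Fin.cons f' (Function.update v j y)))
          = Y (Fin.cons y (Fin.cons x (Function.update v j f'))) := by
      intro j x y f'
      have hk0 : (j.succ.succ : Fin (r+2)) ≠ 0 := Fin.succ_ne_zero _
      have hk1 : (j.succ.succ : Fin (r+2)) ≠ 1 := by
        rw [← Fin.succ_zero_eq_one]
        exact fun hc => Fin.succ_ne_zero j (Fin.succ_injective _ hc)
      have hcomp : (Fin.cons y (Fin.cons x (Function.update v j f')) : Fin (r+2) → ι)
          ∘ ⇑(Equiv.swap (0 : Fin (r+2)) 1 * Equiv.swap (1 : Fin (r+2)) j.succ.succ)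
        = Fin.cons x (Fin.cons f' (Function.update v j y)) := by
        funext i
        simp only [Function.comp_apply, Equiv.Perm.mul_apply]
        induction i using Fin.cases with
        | zero =>
          rw [Equiv.swap_apply_of_ne_of_ne h01 (Ne.symm hk0), Equiv.swap_apply_left,
            ← Fin.succ_zero_eq_one, Fin.cons_succ, Fin.cons_zero, Fin.cons_zero]
        | succ m =>
          induction m using Fin.cases with
          | zero =>
            conv_rhs => rw [Fin.cons_succ, Fin.cons_zero]
            rw [Fin.succ_zero_eq_one, Equiv.swap_apply_left,
              Equiv.swap_apply_of_ne_of_ne hk0 hk1, Fin.cons_succ, Fin.cons_succ,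
              Function.update_self]
          | succ l =>
            by_cases hl : l = j
            · subst hl
              rw [Equiv.swap_apply_right, Equiv.swap_apply_right, Fin.cons_zero,
                Fin.cons_succ, Fin.cons_succ, Function.update_self]
            · have hi0 : (l.succ.succ : Fin (r+2)) ≠ 0 := Fin.succ_ne_zero _
              have hi1 : (l.succ.succ : Fin (r+2)) ≠ 1 := by
                rw [← Fin.succ_zero_eq_one]
                exact fun hc => Fin.succ_ne_zero l (Fin.succ_injective _ hc)
              have hik : (l.succ.succ : Fin (r+2)) ≠ j.succ.succ := fun hc =>
                hl (Fin.succ_injective _ (Fin.succ_injective _ hc))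
              rw [Equiv.swap_apply_of_ne_of_ne hi1 hik,
                Equiv.swap_apply_of_ne_of_ne hi0 hi1,
                Fin.cons_succ, Fin.cons_succ, Fin.cons_succ, Fin.cons_succ,
                Function.update_of_ne hl, Function.update_of_ne hl]
      have halt := hYalt (Equiv.swap (0 : Fin (r+2)) 1 * Equiv.swap (1 : Fin (r+2)) j.succ.succ)
        (Fin.cons y (Fin.cons x (Function.update v j f')))
      rw [hcomp] at halt
      rw [halt, esign_mul, esign_swap h01, esign_swap hk1.symm]
      ring
    -- third piece : Bianchi identity
    have hAJ : (∑ a, ∑ y, ∑ b, ∑ x, ∑ j : Fin r, ∑ e, ∑ f, ginv a y * (ginv b x *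
        (Riem a b (v j) e * ginv e f *
          Y (Fin.cons y (Fin.cons x (Function.update v j f)))))) = 0 := by
      conv_lhs => enter [2, a, 2, y, 2, b]; rw [Finset.sum_comm]
      conv_lhs => enter [2, a, 2, y]; rw [Finset.sum_comm]
      conv_lhs => enter [2, a]; rw [Finset.sum_comm]
      conv_lhs => rw [Finset.sum_comm]
      apply Finset.sum_eq_zero; intro j _
      conv_lhs => enter [2, a]; rw [Finset.sum_comm]
      conv_lhs => enter [2, a, 2, b, 2, y]; rw [Finset.sum_comm]
      conv_lhs => enter [2, a, 2, b]; rw [Finset.sum_comm]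
      have hfact : (∑ a, ∑ b, ∑ e, ∑ y, ∑ x, ∑ f, ginv a y * (ginv b x *
          (Riem a b (v j) e * ginv e f *
            Y (Fin.cons y (Fin.cons x (Function.update v j f))))))
        = ∑ a, ∑ b, ∑ e, Riem a b (v j) e * (∑ y, ∑ x, ∑ f, ginv a y * (ginv b x *
            (ginv e f * Y (Fin.cons y (Fin.cons x (Function.update v j f)))))) := by
        simp only [Finset.mul_sum]
        apply Finset.sum_congr rfl; intro a _
        apply Finset.sum_congr rfl; intro b _
        apply Finset.sum_congr rfl; intro e _
        apply Finset.sum_congr rfl; intro y _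
        apply Finset.sum_congr rfl; intro x _
        apply Finset.sum_congr rfl; intro f _
        ring
      rw [hfact]
      apply sum_cyclic
      · intro a b e
        linarith [hBianchi e a b (v j), hRiemAsym₂ e a b (v j), hRiemAsym₂ a b e (v j),
          hRiemAsym₂ b e a (v j)]
      · intro a b e
        have hrot : (∑ y, ∑ x, ∑ f, ginv b y * (ginv e x * (ginv a f *
            Y (Fin.cons y (Fin.cons x (Function.update v j f))))))
          = ∑ y, ∑ x, ∑ f, ginv b x * (ginv e f * (ginv a y *
            Y (Fin.cons x (Fin.cons f (Function.update v j y))))) :=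
          sum3_rot (fun y x f => ginv b y * (ginv e x * (ginv a f *
            Y (Fin.cons y (Fin.cons x (Function.update v j f))))))
        rw [hrot]
        apply Finset.sum_congr rfl; intro y _
        apply Finset.sum_congr rfl; intro x _
        apply Finset.sum_congr rfl; intro f _
        rw [hYcyc j x y f]
        ring
    rw [hA0, hA1, hAJ]
    ring
  -- antisymmetrize using the Ricci identity
  have hU2 : 2 * (∑ a, ∑ y, ∑ b, ∑ x, ginv a y * (ginv b x * DDY a b (Fin.cons x (Fin.cons y v))))
      = - ∑ a, ∑ y, ∑ b, ∑ x, ginv a y * (ginv b x *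
      (∑ i : Fin (r+2), ∑ e, ∑ f,
        Riem a b ((Fin.cons y (Fin.cons x v) : Fin (r+2) → ι) i) e * ginv e f *
          Y (Function.update (Fin.cons y (Fin.cons x v)) i f))) := by
    have hre : ∑ a, ∑ y, ∑ b, ∑ x, ginv a y * (ginv b x * DDY a b (Fin.cons x (Fin.cons y v)))
        = ∑ a, ∑ y, ∑ b, ∑ x, ginv b x * (ginv a y * DDY b a (Fin.cons y (Fin.cons x v))) := by
      conv_lhs => enter [2, a]; rw [Finset.sum_comm]
      conv_lhs => rw [Finset.sum_comm]
      conv_lhs => enter [2, b, 2, a]; rw [Finset.sum_comm]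
      conv_lhs => enter [2, b]; rw [Finset.sum_comm]
    have hpt : ∀ a y b x, ginv b x * (ginv a y * DDY b a (Fin.cons y (Fin.cons x v)))
        = -(ginv a y * (ginv b x * DDY a b (Fin.cons x (Fin.cons y v))))
          - ginv a y * (ginv b x *
            (∑ i : Fin (r+2), ∑ e, ∑ f,
              Riem a b ((Fin.cons y (Fin.cons x v) : Fin (r+2) → ι) i) e * ginv e f *
                Y (Function.update (Fin.cons y (Fin.cons x v)) i f))) := by
      intro a y b x
      have h1 := hRicciId a b (Fin.cons y (Fin.cons x v))
      have h2 := hDDYswap a b x y v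
      linear_combination (-(ginv a y * ginv b x)) * h1 + (ginv a y * ginv b x) * h2
    calc 2 * (∑ a, ∑ y, ∑ b, ∑ x, ginv a y * (ginv b x * DDY a b (Fin.cons x (Fin.cons y v))))
        = (∑ a, ∑ y, ∑ b, ∑ x, ginv a y * (ginv b x * DDY a b (Fin.cons x (Fin.cons y v))))
          + ∑ a, ∑ y, ∑ b, ∑ x, ginv b x * (ginv a y * DDY b a (Fin.cons y (Fin.cons x v))) := by
          rw [← hre]; ring
      _ = (∑ a, ∑ y, ∑ b, ∑ x, ginv a y * (ginv b x * DDY a b (Fin.cons x (Fin.cons y v))))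
          + ∑ a, ∑ y, ∑ b, ∑ x,
            (-(ginv a y * (ginv b x * DDY a b (Fin.cons x (Fin.cons y v))))
              - ginv a y * (ginv b x *
                (∑ i : Fin (r+2), ∑ e, ∑ f,
                  Riem a b ((Fin.cons y (Fin.cons x v) : Fin (r+2) → ι) i) e * ginv e f *
                    Y (Function.update (Fin.cons y (Fin.cons x v)) i f)))) := by
          congr 1
          exact Finset.sum_congr rfl fun a _ => Finset.sum_congr rfl fun y _ =>
            Finset.sum_congr rfl fun b _ => Finset.sum_congr rfl fun x _ => hpt a y b x
      _ = - ∑ a, ∑ y, ∑ b, ∑ x, ginv a y * (ginv b x *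
            (∑ i : Fin (r+2), ∑ e, ∑ f,
              Riem a b ((Fin.cons y (Fin.cons x v) : Fin (r+2) → ι) i) e * ginv e f *
                Y (Function.update (Fin.cons y (Fin.cons x v)) i f))) := by
          simp only [Finset.sum_sub_distrib, Finset.sum_neg_distrib]
          ring
  -- conclude
  have hfinal : 2 * (2 * ((((Fintype.card ι : ℝ) - ((r+1 : ℕ) : ℝ)) / (((r+1 : ℕ) : ℝ) + 1)) *
      ∑ a, ∑ y, ginv a y * Dh a (Fin.cons y v))) = 0 := by
    rw [← hU1, hU2, hWzero]
    ring
  have hden : (((r+1 : ℕ) : ℝ) + 1) ≠ 0 := by positivity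
  have hnum : ((Fintype.card ι : ℝ) - ((r+1 : ℕ) : ℝ)) ≠ 0 := by
    push_cast
    intro hcon
    linarith [hcardlt]
  have hne : ((((Fintype.card ι : ℝ) - ((r+1 : ℕ) : ℝ)) / (((r+1 : ℕ) : ℝ) + 1))) ≠ 0 :=
    div_ne_zero hnum hden
  have h4 : (((Fintype.card ι : ℝ) - ((r+1 : ℕ) : ℝ)) / (((r+1 : ℕ) : ℝ) + 1)) *
      (∑ a, ∑ y, ginv a y * Dh a (Fin.cons y v)) = 0 := by linarith
  exact (mul_eq_zero.mp h4).resolve_left hne
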